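/- For even n ≥ 8, no set of integers containing 0 is a signature for G_n, the complement of two disjoint cycles of length n/2. -/

import Mathlib

/-- The disjoint union of two cycles of length `m`, on vertex set `Fin 2 × ZMod m`. -/
def twoCycles (m : ℕ) : SimpleGraph (Fin 2 × ZMod m) where
  Adj x y := x.1 = y.1 ∧ x ≠ y ∧ (x.2 - y.2 = 1 ∨ y.2 - x.2 = 1)
  symm := by
    constructor
    rintro x y ⟨h1, h2, h3⟩
    exact ⟨h1.symm, h2.symm, h3.symm⟩
  loopless := by
    constructor
    rintro x ⟨-, h, -⟩
    exact h rfl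

lemma no_zero_sig_aux (m : ℕ) (hm : 4 ≤ m) (S : Finset ℤ) (h0 : (0 : ℤ) ∈ S)
    (π : {x // x ∈ S} ≃ (Fin 2 × ZMod m))
    (hπ : ∀ a b : {x // x ∈ S}, a ≠ b →
      ((twoCycles m)ᶜ.Adj (π a) (π b) ↔ |(a : ℤ) - (b : ℤ)| ∈ S)) : False := by
  haveI : NeZero m := ⟨by omega⟩
  -- basic facts about ZMod m
  have h1ne : (1 : ZMod m) ≠ 0 := by
    intro h
    have := (ZMod.natCast_eq_zero_iff 1 m).mp (by exact_mod_cast h)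
    have := Nat.le_of_dvd one_pos this
    omega
  have h2ne : (2 : ZMod m) ≠ 0 := by
    intro h
    have := (ZMod.natCast_eq_zero_iff 2 m).mp (by exact_mod_cast h)
    have := Nat.le_of_dvd two_pos this
    omega
  -- cardinality
  have hcard : S.card = 2 * m := by
    have h := Fintype.card_congr π
    rw [Fintype.card_coe, Fintype.card_prod, Fintype.card_fin, ZMod.card] at h
    exact h
  -- adjacency in twoCycles iff difference not in S
  have key : ∀ a b : {x // x ∈ S}, a ≠ b →
      ((twoCycles m).Adj (π a) (π b) ↔ |(a : ℤ) - (b : ℤ)| ∉ S) := by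
    intro a b hab
    have h := hπ a b hab
    rw [SimpleGraph.compl_adj] at h
    have hne : π a ≠ π b := fun he => hab (π.injective he)
    constructor
    · intro hadj hmem
      exact (h.mpr hmem).2 hadj
    · intro hmem
      by_contra hadj
      exact hmem (h.mp ⟨hne, hadj⟩)
  -- neighbors in twoCycles
  have nbr : ∀ x y : Fin 2 × ZMod m, (twoCycles m).Adj x y →
      y = (x.1, x.2 + 1) ∨ y = (x.1, x.2 - 1) := by
    rintro x y ⟨hf, -, hs | hs⟩
    · right
      have : y.2 = x.2 - 1 := by linear_combination -hs
      exact Prod.ext hf.symm this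
    · left
      have : y.2 = x.2 + 1 := by linear_combination hs
      exact Prod.ext hf.symm this
  have adj_up : ∀ x : Fin 2 × ZMod m, (twoCycles m).Adj x (x.1, x.2 + 1) := by
    intro x
    refine ⟨rfl, ?_, Or.inr (by ring)⟩
    intro h
    have := congrArg Prod.snd h
    simp only at this
    exact h1ne (by linear_combination -this)
  have adj_down : ∀ x : Fin 2 × ZMod m, (twoCycles m).Adj x (x.1, x.2 - 1) := by
    intro x
    refine ⟨rfl, ?_, Or.inl (by ring)⟩
    intro h
    have := congrArg Prod.snd h
    simp only at this
    exact h1ne (by linear_combination this)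
  -- the zero vertex
  set z : {x // x ∈ S} := ⟨0, h0⟩ with hz
  set u : Fin 2 × ZMod m := π z with hu
  set μ : {x // x ∈ S} := π.symm (u.1, u.2 + 1) with hμ
  set ν : {x // x ∈ S} := π.symm (u.1, u.2 - 1) with hν
  have hπμ : π μ = (u.1, u.2 + 1) := π.apply_symm_apply _
  have hπν : π ν = (u.1, u.2 - 1) := π.apply_symm_apply _
  have hμν : μ ≠ ν := by
    intro h
    have : (u.1, u.2 + 1) = ((u.1, u.2 - 1) : Fin 2 × ZMod m) := by rw [← hπμ, ← hπν, h]
    have := congrArg Prod.snd this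
    simp only at this
    exact h2ne (by linear_combination this)
  have hμz : μ ≠ z := by
    intro h
    have : (u.1, u.2 + 1) = u := by rw [← hπμ, h, hu]
    have := congrArg Prod.snd this
    simp only at this
    exact h1ne (by linear_combination this)
  have hνz : ν ≠ z := by
    intro h
    have : (u.1, u.2 - 1) = u := by rw [← hπν, h, hu]
    have := congrArg Prod.snd this
    simp only at this
    exact h1ne (by linear_combination -this)
  -- μ and ν are negative
  have negval : ∀ w : {x // x ∈ S}, w ≠ z → (twoCycles m).Adj (π z) (π w) → (w : ℤ) < 0 := by
    intro w hwz hadj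
    have hk := (key z w (Ne.symm hwz)).mp hadj
    have hval : (w : ℤ) ≠ 0 := fun h => hwz (Subtype.ext h)
    by_contra hge
    push_neg at hge
    have hpos : (0 : ℤ) < w := lt_of_le_of_ne hge (Ne.symm hval)
    have : |(z : ℤ) - w| = (w : ℤ) := by
      simp only [hz]
      rw [abs_sub_comm]
      simpa using abs_of_pos hpos
    rw [this] at hk
    exact hk w.2
  have hμneg : (μ : ℤ) < 0 := by
    apply negval μ hμz
    rw [hπμ, ← hu]
    exact adj_up u
  have hνneg : (ν : ℤ) < 0 := by
    apply negval ν hνz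
    rw [hπν, ← hu]
    exact adj_down u
  -- max element
  have hSne : S.Nonempty := ⟨0, h0⟩
  set Mval : ℤ := S.max' hSne with hMval
  have hMmem : Mval ∈ S := S.max'_mem hSne
  set M : {x // x ∈ S} := ⟨Mval, hMmem⟩ with hMdef
  have hMtop : ∀ s ∈ S, s ≤ Mval := fun s hs => S.le_max' s hs
  have hM0 : 0 ≤ Mval := hMtop 0 h0
  -- every negative element is adjacent (in twoCycles) to π M
  have lemA : ∀ b : {x // x ∈ S}, (b : ℤ) < 0 → (twoCycles m).Adj (π M) (π b) := by
    intro b hb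
    have hbM : M ≠ b := by
      intro h
      rw [← h] at hb
      simp only [hMdef] at hb
      omega
    rw [key M b hbM]
    intro hmem
    have habs : |(M : ℤ) - b| = Mval - b := by
      apply abs_of_pos
      simp only [hMdef]
      omega
    rw [habs] at hmem
    have := hMtop _ hmem
    omega
  -- negatives are exactly μ and ν
  have negsub : ∀ b : {x // x ∈ S}, (b : ℤ) < 0 → b = μ ∨ b = ν := by
    intro b hb
    have h1 := nbr _ _ (lemA μ hμneg)
    have h2 := nbr _ _ (lemA ν hνneg)
    have h3 := nbr _ _ (lemA b hb)
    rcases h1 with h1 | h1 <;> rcases h2 with h2 | h2 <;> rcases h3 with h3 | h3 <;>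
      first
        | exact absurd (π.injective (h1.trans h2.symm)) hμν
        | (left; exact π.injective (h3.trans h1.symm))
        | (right; exact π.injective (h3.trans h2.symm))
  -- there is a positive element, so Mval > 0
  have hMpos : 0 < Mval := by
    rcases lt_or_eq_of_le hM0 with h | h
    · exact h
    · exfalso
      have hsub : S ⊆ {0, (μ : ℤ), (ν : ℤ)} := by
        intro s hs
        rcases lt_trichotomy s 0 with h' | h' | h'
        · rcases negsub ⟨s, hs⟩ h' with e | e
          · have : s = (μ : ℤ) := congrArg Subtype.val e
            simp [this]
          · have : s = (ν : ℤ) := congrArg Subtype.val e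
            simp [this]
        · simp [h']
        · have := hMtop s hs
          omega
      have hle := Finset.card_le_card hsub
      have : ({0, (μ : ℤ), (ν : ℤ)} : Finset ℤ).card ≤ 3 := by
        apply le_trans (Finset.card_insert_le _ _)
        have := Finset.card_insert_le ((ν : ℤ)) ({(ν : ℤ)} : Finset ℤ)
        simp [Finset.card_insert_le]
        have := Finset.card_insert_le ((μ : ℤ)) ({(ν : ℤ)} : Finset ℤ)
        simp at this; omega
      omega
  have hzM : z ≠ M := by
    intro h
    have : (0 : ℤ) = Mval := congrArg Subtype.val h
    omega
  set v : Fin 2 × ZMod m := π M with hv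
  have huv : u ≠ v := fun h => hzM (π.injective (by rw [← hu, ← hv, h]))
  -- μ and ν are neighbors of v too
  have hμv := nbr _ _ (lemA μ hμneg)
  have hνv := nbr _ _ (lemA ν hνneg)
  have hfst : v.1 = u.1 := by
    rcases hμv with h | h <;>
      · have := congrArg Prod.fst (hπμ.symm.trans h)
        simpa using this.symm
  have hv2 : v.2 = u.2 + 2 := by
    rcases hμv with h | h
    · exfalso
      have h' := congrArg Prod.snd (hπμ.symm.trans h)
      simp only at h'
      have hsnd : u.2 = v.2 := by linear_combination h'
      exact huv (Prod.ext hfst.symm hsnd)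
    · have h' := congrArg Prod.snd (hπμ.symm.trans h)
      simp only at h'
      linear_combination -h'
  have hv2' : v.2 = u.2 - 2 := by
    rcases hνv with h | h
    · have h' := congrArg Prod.snd (hπν.symm.trans h)
      simp only at h'
      linear_combination -h'
    · exfalso
      have h' := congrArg Prod.snd (hπν.symm.trans h)
      simp only at h'
      have hsnd : u.2 = v.2 := by linear_combination h'
      exact huv (Prod.ext hfst.symm hsnd)
  -- hence 4 = 0 in ZMod m, so m = 4
  have h4 : (4 : ZMod m) = 0 := by linear_combination hv2' - hv2
  have hm4 : m = 4 := by
    have := (ZMod.natCast_eq_zero_iff 4 m).mp (by exact_mod_cast h4)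
    have := Nat.le_of_dvd (by norm_num) this
    omega
  subst hm4
  -- classification of the component of u
  have comp : ∀ w : {x // x ∈ S}, (π w).1 = u.1 → w = z ∨ w = μ ∨ w = ν ∨ w = M := by
    intro w hw
    have hall : ∀ d : ZMod 4, d = 0 ∨ d = 1 ∨ d = 2 ∨ d = -1 := by decide
    rcases hall ((π w).2 - u.2) with hd | hd | hd | hd
    · left
      apply π.injective
      rw [← hu]
      exact Prod.ext hw (by linear_combination hd)
    · right; left
      apply π.injective
      rw [hπμ]
      exact Prod.ext hw (by linear_combination hd)
    · right; right; right
      apply π.injective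
      rw [← hv]
      exact Prod.ext (hw.trans hfst.symm) (by rw [hv2]; linear_combination hd)
    · right; right; left
      apply π.injective
      rw [hπν]
      exact Prod.ext hw (by linear_combination hd)
  -- the other component
  set T : Finset {x // x ∈ S} := Finset.univ.filter (fun w => (π w).1 ≠ u.1) with hT
  have hTne : T.Nonempty := by
    refine ⟨π.symm (u.1 + 1, u.2), ?_⟩
    rw [hT, Finset.mem_filter]
    refine ⟨Finset.mem_univ _, ?_⟩
    rw [π.apply_symm_apply]
    have : ∀ c : Fin 2, c + 1 ≠ c := by decide
    exact this u.1
  obtain ⟨p, hpT, hpmax⟩ := T.exists_max_image (fun w => (w : ℤ)) hTne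
  have hp1 : (π p).1 ≠ u.1 := (Finset.mem_filter.mp hpT).2
  have hpz : p ≠ z := fun h => hp1 (by rw [h, ← hu])
  have hpμ : p ≠ μ := fun h => hp1 (by rw [h, hπμ])
  have hpν : p ≠ ν := fun h => hp1 (by rw [h, hπν])
  have hppos : (0 : ℤ) < p := by
    rcases lt_trichotomy (p : ℤ) 0 with h | h | h
    · rcases negsub p h with e | e
      · exact absurd e hpμ
      · exact absurd e hpν
    · exact absurd (Subtype.ext h) hpz
    · exact h
  -- cross-component adjacency gives differences in S
  have cross : ∀ q : {x // x ∈ S}, (π q).1 = u.1 → |(q : ℤ) - p| ∈ S := by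
    intro q hq
    have hqp : q ≠ p := fun h => hp1 (h ▸ hq)
    apply (hπ q p hqp).mp
    rw [SimpleGraph.compl_adj]
    constructor
    · intro h
      exact hp1 ((congrArg Prod.fst h).symm.trans hq)
    · rintro ⟨hf, -, -⟩
      exact hp1 (hf.symm.trans hq)
  -- apply with μ and ν
  have keyq : ∀ q : {x // x ∈ S}, (π q).1 = u.1 → (q : ℤ) < 0 → ((p : ℤ) - q) = Mval := by
    intro q hq hqneg
    have hmem := cross q hq
    have habs : |(q : ℤ) - p| = (p : ℤ) - q := by
      rw [abs_sub_comm]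
      apply abs_of_pos
      omega
    rw [habs] at hmem
    set E : {x // x ∈ S} := ⟨(p : ℤ) - q, hmem⟩ with hE
    have hEgt : (p : ℤ) < (E : ℤ) := by simp only [hE]; omega
    have hEcomp : (π E).1 = u.1 := by
      by_contra h
      have hET : E ∈ T := by
        rw [hT, Finset.mem_filter]
        exact ⟨Finset.mem_univ _, h⟩
      have := hpmax E hET
      omega
    rcases comp E hEcomp with e | e | e | e
    · exfalso
      have : (E : ℤ) = 0 := congrArg Subtype.val e
      omega
    · exfalso
      have : (E : ℤ) = (μ : ℤ) := congrArg Subtype.val e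
      omega
    · exfalso
      have : (E : ℤ) = (ν : ℤ) := congrArg Subtype.val e
      omega
    · exact congrArg Subtype.val e
  have e1 : (p : ℤ) - μ = Mval := keyq μ (by rw [hπμ]) hμneg
  have e2 : (p : ℤ) - ν = Mval := keyq ν (by rw [hπν]) hνneg
  exact hμν (Subtype.ext (by omega))

theorem no_zero_signature_Gn (n : ℕ) (hn : 8 ≤ n) (heven : Even n)
    (S : Finset ℤ) (h0 : (0 : ℤ) ∈ S) :
    ¬ ∃ π : {x // x ∈ S} ≃ (Fin 2 × ZMod (n / 2)),
        ∀ a b : {x // x ∈ S}, a ≠ b →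
          ((twoCycles (n / 2))ᶜ.Adj (π a) (π b) ↔ |(a : ℤ) - (b : ℤ)| ∈ S) := by
  rintro ⟨π, hπ⟩
  obtain ⟨k, hk⟩ := heven
  exact no_zero_sig_aux (n / 2) (by omega) S h0 π hπ
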